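/- Let X be a metric space, M ⊆ X, and suppose for every ε > 0, choosing l ∈ ℕ with ζ^{l+1} R ≤ ε < ζ^l R (where 0 < ζ < 1, R > 0), the minimal number of ε-balls needed to cover M satisfies N_ε(M) ≤ 2(l+1)² K^l for a constant K ≥ 2. Then the fractal dimension of M satisfies dim_f M = limsup_{ε→0} ln N_ε(M)/ln(1/ε) ≤ ln K / (−ln ζ). -/

import Mathlib

open scoped Topology

/-- Minimal number of `ε`-balls needed to cover `M` (0 if no finite cover exists). -/
noncomputable def coverNum {X : Type*} [PseudoMetricSpace X] (ε : ℝ) (M : Set X) : ℕ :=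
  sInf {n : ℕ | ∃ s : Finset X, s.card = n ∧ M ⊆ ⋃ c ∈ s, Metric.ball c ε}

/-- Upper box-counting (fractal) dimension. -/
noncomputable def fractalDim {X : Type*} [PseudoMetricSpace X] (M : Set X) : ℝ :=
  Filter.limsup (fun ε : ℝ => Real.log (coverNum ε M) / Real.log (1 / ε)) (𝓝[>] (0 : ℝ))

open Filter in
private lemma log_succ_div_tendsto :
    Filter.Tendsto (fun n : ℕ => Real.log (n+1) / n) atTop (𝓝 0) := by
  have h1 : (fun n : ℕ => Real.log (n+1)) =o[atTop] (fun n : ℕ => ((n:ℝ)+1)) :=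
    Real.isLittleO_log_id_atTop.comp_tendsto
      (tendsto_natCast_atTop_atTop.atTop_add tendsto_const_nhds)
  have h2 : (fun n : ℕ => ((n:ℝ)+1)) =O[atTop] (fun n : ℕ => (n:ℝ)) := by
    apply Asymptotics.IsBigO.of_bound 2
    filter_upwards [eventually_ge_atTop 1] with n hn
    have : (1:ℝ) ≤ n := by exact_mod_cast hn
    simp only [Real.norm_eq_abs]
    rw [abs_of_nonneg (by linarith), abs_of_nonneg (by linarith)]
    linarith
  exact (h1.trans_isBigO h2).tendsto_div_nhds_zero

open Filter in
private lemma g_tendsto (ζ R K : ℝ) (hζ0 : 0 < ζ) (hζ1 : ζ < 1) :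
    Filter.Tendsto
      (fun n : ℕ => (Real.log 2 + 2 * Real.log (n+1) + n * Real.log K) /
        (n * (-Real.log ζ) - Real.log R)) atTop
      (𝓝 (Real.log K / (-Real.log ζ))) := by
  have hlogζ : Real.log ζ < 0 := Real.log_neg hζ0 hζ1
  have hnum : Filter.Tendsto
      (fun n : ℕ => Real.log 2 / n + 2 * (Real.log (n+1) / n) + Real.log K) atTop
      (𝓝 (Real.log K)) := by
    have := ((tendsto_const_div_atTop_nhds_zero_nat (Real.log 2)).add
      ((log_succ_div_tendsto).const_mul 2)).add_const (Real.log K)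
    simpa using this
  have hden : Filter.Tendsto
      (fun n : ℕ => -Real.log ζ - Real.log R / n) atTop (𝓝 (-Real.log ζ)) := by
    have := (tendsto_const_div_atTop_nhds_zero_nat (Real.log R)).const_sub (-Real.log ζ)
    simpa using this
  have := hnum.div hden (by linarith)
  apply this.congr'
  filter_upwards [eventually_gt_atTop 0] with n hn
  have hn' : (n:ℝ) ≠ 0 := Nat.cast_ne_zero.2 hn.ne'
  rw [Pi.div_apply]
  field_simp

open Filter in
theorem fractal_dimension_bound_from_covering
    {X : Type*} [MetricSpace X] (M : Set X) (ζ R K : ℝ)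
    (hζ0 : 0 < ζ) (hζ1 : ζ < 1) (hR : 0 < R) (hK : 2 ≤ K)
    (h : ∀ ε > (0 : ℝ), ∀ l : ℕ, ζ ^ (l + 1) * R ≤ ε → ε < ζ ^ l * R →
      (coverNum ε M : ℝ) ≤ 2 * (l + 1) ^ 2 * K ^ l) :
    fractalDim M ≤ Real.log K / (-Real.log ζ) := by
  classical
  have hlogζ : Real.log ζ < 0 := Real.log_neg hζ0 hζ1
  have hK0 : (0:ℝ) < K := by linarith
  have hpow : Filter.Tendsto (fun m : ℕ => ζ ^ (m+1) * R) Filter.atTop (𝓝 0) := by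
    have h1 := tendsto_pow_atTop_nhds_zero_of_lt_one hζ0.le hζ1
    have h2 := (h1.comp (tendsto_add_atTop_nat 1)).mul_const R
    simpa using h2
  have hex : ∀ ε : ℝ, 0 < ε → ∃ m : ℕ, ζ ^ (m+1) * R ≤ ε := fun ε hε =>
    ((hpow.eventually (gt_mem_nhds hε)).mono fun m hm => hm.le).exists
  set l : ℝ → ℕ := fun ε => if hε : 0 < ε then Nat.find (hex ε hε) else 0 with hl_def
  have hl1 : ∀ ε : ℝ, 0 < ε → ζ ^ (l ε + 1) * R ≤ ε := by
    intro ε hε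
    simp only [hl_def, dif_pos hε]
    exact Nat.find_spec (hex ε hε)
  have hl2 : ∀ ε : ℝ, 0 < ε → ε < R → ε < ζ ^ (l ε) * R := by
    intro ε hε hεR
    rcases Nat.eq_zero_or_pos (l ε) with h0 | hpos
    · simpa [h0] using hεR
    · have := Nat.find_min (hex ε hε) (m := l ε - 1) (by
        simp only [hl_def, dif_pos hε] at hpos ⊢; omega)
      rw [Nat.sub_add_cancel hpos] at this
      simp only [hl_def, dif_pos hε] at this ⊢
      push_neg at this
      exact this
  have hl3 : Filter.Tendsto l (𝓝[>] (0:ℝ)) Filter.atTop := by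
    rw [tendsto_atTop]
    intro b
    have hb : (0:ℝ) < ζ ^ b * R := by positivity
    filter_upwards [self_mem_nhdsWithin,
      eventually_nhdsWithin_of_eventually_nhds
        ((tendsto_id (x := 𝓝 (0:ℝ))).eventually_lt_const hb)] with ε hε hεb
    have hε' : 0 < ε := hε
    have h1 := hl1 ε hε'
    have h2 : ζ ^ (l ε + 1) * R < ζ ^ b * R := lt_of_le_of_lt h1 hεb
    have h3 : ζ ^ (l ε + 1) < ζ ^ b := lt_of_mul_lt_mul_right h2 hR.le
    have := (pow_lt_pow_iff_right_of_lt_one₀ hζ0 hζ1).1 h3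
    omega
  set g : ℕ → ℝ := fun n => (Real.log 2 + 2 * Real.log (n+1) + n * Real.log K) /
      (n * (-Real.log ζ) - Real.log R) with hg_def
  have hg : Filter.Tendsto g atTop (𝓝 (Real.log K / (-Real.log ζ))) :=
    g_tendsto ζ R K hζ0 hζ1
  have hgl : Filter.Tendsto (fun ε => g (l ε)) (𝓝[>] (0:ℝ))
      (𝓝 (Real.log K / (-Real.log ζ))) := hg.comp hl3
  set f : ℝ → ℝ := fun ε => Real.log (coverNum ε M) / Real.log (1/ε) with hf_def
  have hDpos : ∀ᶠ ε in 𝓝[>] (0:ℝ), 0 < (l ε) * (-Real.log ζ) - Real.log R := by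
    have hD : Filter.Tendsto (fun n : ℕ => (n:ℝ) * (-Real.log ζ) - Real.log R) atTop atTop := by
      apply Filter.tendsto_atTop_add_const_right
      exact Filter.Tendsto.atTop_mul_const (by linarith) tendsto_natCast_atTop_atTop
    exact (hD.comp hl3).eventually_gt_atTop 0
  have hεsmall : ∀ᶠ ε in 𝓝[>] (0:ℝ), ε < R ∧ ε < 1 := by
    filter_upwards [eventually_nhdsWithin_of_eventually_nhds
      ((tendsto_id (x := 𝓝 (0:ℝ))).eventually_lt_const (lt_min hR one_pos))] with ε hε
    exact ⟨lt_of_lt_of_le hε (min_le_left _ _), lt_of_lt_of_le hε (min_le_right _ _)⟩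
  have hlogε : ∀ᶠ ε in 𝓝[>] (0:ℝ), 0 < Real.log (1/ε) := by
    filter_upwards [self_mem_nhdsWithin, hεsmall] with ε hε h1
    exact Real.log_pos ((one_lt_div hε).2 h1.2)
  have hfg : ∀ᶠ ε in 𝓝[>] (0:ℝ), f ε ≤ g (l ε) := by
    filter_upwards [self_mem_nhdsWithin, hDpos, hεsmall, hlogε] with ε hε hD hsm hlε
    have hε' : 0 < ε := hε
    set n := l ε with hn_def
    have hN : (coverNum ε M : ℝ) ≤ 2 * (n + 1) ^ 2 * K ^ n :=
      h ε hε' n (hl1 ε hε') (hl2 ε hε' hsm.1)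
    have hB1 : (1:ℝ) ≤ 2 * ((n:ℝ) + 1) ^ 2 * K ^ n := by
      have h1 : (1:ℝ) ≤ ((n:ℝ)+1)^2 := one_le_pow₀ (by
        have := Nat.cast_nonneg (α := ℝ) n; linarith)
      have h2 : (1:ℝ) ≤ K ^ n := one_le_pow₀ (by linarith)
      nlinarith
    have hlogN : Real.log (coverNum ε M) ≤ Real.log (2 * ((n:ℝ) + 1) ^ 2 * K ^ n) := by
      rcases Nat.eq_zero_or_pos (coverNum ε M) with h0 | hpos
      · rw [h0]
        simpa using Real.log_nonneg hB1
      · exact Real.log_le_log (by exact_mod_cast hpos) (by exact_mod_cast hN)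
    have hlogB : Real.log (2 * ((n:ℝ) + 1) ^ 2 * K ^ n)
        = Real.log 2 + 2 * Real.log ((n:ℝ)+1) + n * Real.log K := by
      rw [Real.log_mul (by positivity) (by positivity),
        Real.log_mul (by norm_num) (by positivity), Real.log_pow, Real.log_pow]
      push_cast; ring
    have hD2 : (n:ℝ) * (-Real.log ζ) - Real.log R ≤ Real.log (1/ε) := by
      have h1 : Real.log ε ≤ Real.log (ζ ^ n * R) :=
        Real.log_le_log hε' (hl2 ε hε' hsm.1).le
      rw [Real.log_mul (by positivity) hR.ne', Real.log_pow] at h1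
      rw [one_div, Real.log_inv]
      linarith
    have hlogNnn : 0 ≤ Real.log (coverNum ε M) := Real.log_natCast_nonneg _
    calc f ε ≤ Real.log (coverNum ε M) / ((n:ℝ) * (-Real.log ζ) - Real.log R) :=
          div_le_div_of_nonneg_left hlogNnn hD hD2
      _ ≤ g n := by
          have hgn : g n = Real.log (2 * ((n:ℝ) + 1) ^ 2 * K ^ n) /
              ((n:ℝ) * (-Real.log ζ) - Real.log R) := by
            rw [hg_def, hlogB]
          rw [hgn]
          gcongr
  have hge0 : ∀ᶠ ε in 𝓝[>] (0:ℝ), (0:ℝ) ≤ f ε := by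
    filter_upwards [hlogε] with ε hlε
    exact div_nonneg (Real.log_natCast_nonneg _) hlε.le
  have hco : (𝓝[>] (0:ℝ)).IsCoboundedUnder (· ≤ ·) f :=
    Filter.isCoboundedUnder_le_of_eventually_le _ hge0
  have hbd : (𝓝[>] (0:ℝ)).IsBoundedUnder (· ≤ ·) (fun ε => g (l ε)) :=
    hgl.isBoundedUnder_le
  have hmain := Filter.limsup_le_limsup hfg hco hbd
  rw [hgl.limsup_eq] at hmain
  exact hmain
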